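/- Let β ∈ (0,√2), α = 4/β², and let ν be a probability measure on [0,∞) such that ∫₀^∞ x^{2N} ν(dx) = N^{β²N/2} e^{c**N + o(N)} as N → ∞, for some c** ∈ ℝ. Set c* = (β²/2) e^{−1 − 2c**/β²}. Then lim_{t→∞} t^{−α} log ν([t,∞)) = −c*. -/

import Mathlib

open MeasureTheory Filter

open Set


private lemma log_add_le_aux {B u : ℝ} (hB : 0 < B) (hu : 0 ≤ u) :
    Real.log (B + u) ≤ Real.log B + u / B := by
  have h1 : 0 < (B + u) / B := by positivity
  have h2 := Real.log_le_sub_one_of_pos h1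
  rw [Real.log_div (by positivity) (ne_of_gt hB)] at h2
  have h3 : (B + u) / B - 1 = u / B := by field_simp; ring
  linarith [h3 ▸ h2]

private lemma oev_aux {o : ℕ → ℝ} (ho : Tendsto (fun N : ℕ => o N / N) atTop (nhds 0))
    {δ : ℝ} (hδ : 0 < δ) : ∀ᶠ n : ℕ in atTop, |o n| ≤ δ * n := by
  have h1 : ∀ᶠ n : ℕ in atTop, dist (o n / n) 0 < δ := (Metric.tendsto_nhds.mp ho) δ hδ
  filter_upwards [h1, eventually_ge_atTop 1] with n h1 h2
  rw [Real.dist_eq, sub_zero] at h1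
  have hn : (0:ℝ) < n := by exact_mod_cast h2
  have h3 : |o n| = |o n / n| * n := by
    rw [abs_div, abs_of_pos hn]; field_simp
  rw [h3]
  exact mul_le_mul_of_nonneg_right h1.le hn.le

/-- Key "Legendre" estimate. -/
private lemma EU_aux (p css γ : ℝ) (hp : 0 < p) (hγ : γ = Real.exp (-1 - css / p))
    (o : ℕ → ℝ) (ho : Tendsto (fun N : ℕ => o N / N) atTop (nhds 0))
    {δ : ℝ} (hδ : 0 < δ) :
    ∀ᶠ s : ℝ in atTop, ∀ N : ℕ, N = ⌊γ * s ^ ((2:ℝ)/p)⌋₊ →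
      p * N * Real.log N + css * N + o N ≤ 2 * N * Real.log s + (-(p*γ) + δ) * s ^ ((2:ℝ)/p) := by
  have hγ0 : 0 < γ := hγ ▸ Real.exp_pos _
  set α := (2:ℝ)/p with hα
  have hα0 : 0 < α := by positivity
  have hsα : Tendsto (fun s : ℝ => s ^ α) atTop atTop := tendsto_rpow_atTop hα0
  have hg : Tendsto (fun s : ℝ => γ * s ^ α) atTop atTop := hsα.const_mul_atTop hγ0
  set δ₂ := min (δ / (2*γ)) (p/2) with hδ₂
  have hδ₂0 : 0 < δ₂ := by apply lt_min <;> positivity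
  have hNf : Tendsto (fun s : ℝ => ⌊γ * s ^ α⌋₊) atTop atTop :=
    tendsto_nat_floor_atTop.comp hg
  have hoev := hNf.eventually (oev_aux ho hδ₂0)
  filter_upwards [eventually_ge_atTop (1:ℝ), hg.eventually (eventually_ge_atTop 2),
    hsα.eventually (eventually_ge_atTop (2*p/δ)), hoev] with s hs1 hg2 hsp hos
  intro N hN
  subst hN
  have hs0 : (0:ℝ) < s := lt_of_lt_of_le one_pos hs1
  set N := ⌊γ * s ^ α⌋₊ with hNdef
  set x : ℝ := (N : ℝ) with hx
  have hxle : x ≤ γ * s ^ α := Nat.floor_le (by positivity)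
  have hxge : γ * s ^ α - 1 ≤ x := le_of_lt (by exact_mod_cast Nat.sub_one_lt_floor (γ * s ^ α))
  have hx1 : (1:ℝ) ≤ x := by linarith
  have hx0 : (0:ℝ) < x := by linarith
  have hlog : Real.log x ≤ Real.log γ + α * Real.log s := by
    calc Real.log x ≤ Real.log (γ * s ^ α) := Real.log_le_log hx0 (by linarith)
    _ = Real.log γ + α * Real.log s := by
        rw [Real.log_mul (ne_of_gt hγ0) (by positivity), Real.log_rpow hs0]
  have hkey : p * Real.log γ + css = -p := by
    rw [hγ, Real.log_exp]; field_simp; ring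
  have hα2 : p * α = 2 := by rw [hα]; field_simp
  have hos2 := (abs_le.mp hos).2
  have hsα0 : (0:ℝ) ≤ s ^ α := by positivity
  have hstep1 : p * x * Real.log x ≤ p * x * (Real.log γ + α * Real.log s) :=
    mul_le_mul_of_nonneg_left hlog (by positivity)
  have hstep2 : p * x * (Real.log γ + α * Real.log s) = 2 * x * Real.log s + (-p) * x - css * x := by
    linear_combination (x * Real.log s) * hα2 + x * hkey
  have hδ₂p : δ₂ ≤ p/2 := min_le_right _ _
  have hstep3 : (-(p - δ₂)) * x ≤ (-(p - δ₂)) * (γ * s ^ α - 1) :=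
    mul_le_mul_of_nonpos_left hxge (by linarith)
  have h1 : δ₂ * γ ≤ δ/2 := by
    have h := mul_le_mul_of_nonneg_right (min_le_left (δ / (2*γ)) (p/2)) hγ0.le
    have he : δ/(2*γ)*γ = δ/2 := by field_simp
    linarith [he ▸ h]
  have h1' : δ₂ * γ * s ^ α ≤ (δ/2) * s ^ α := mul_le_mul_of_nonneg_right h1 hsα0
  have h2 : p - δ₂ ≤ (δ/2) * s ^ α := by
    have h := mul_le_mul_of_nonneg_left hsp (le_of_lt (half_pos hδ))
    have he : (δ/2) * (2*p/δ) = p := by field_simp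
    linarith [he ▸ h]
  nlinarith [hstep3]

private lemma int_aux {ν : Measure ℝ} {p css : ℝ} {o : ℕ → ℝ}
    (hM : ∀ N : ℕ, 1 ≤ N → ∫ x, x ^ (2*N) ∂ν
      = Real.exp (p * N * Real.log N + css * N + o N)) :
    ∀ N : ℕ, 1 ≤ N → Integrable (fun x : ℝ => x ^ (2*N)) ν := by
  intro N hN
  by_contra h
  have h0 : Real.exp (p * N * Real.log N + css * N + o N) = 0 := by
    rw [← hM N hN]; exact integral_undef h
  exact Real.exp_ne_zero _ h0

private lemma markov_aux (ν : Measure ℝ) [IsProbabilityMeasure ν] (N : ℕ)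
    (hint : Integrable (fun x : ℝ => x ^ (2*N)) ν) {s : ℝ} (hs : 0 ≤ s) :
    (ν (Ici s)).toReal * s ^ (2*N) ≤ ∫ x, x ^ (2*N) ∂ν := by
  have h1 : s ^ (2*N) * (ν (Ici s)).toReal ≤ ∫ x in Ici s, x ^ (2*N) ∂ν :=
    setIntegral_ge_of_const_le_real measurableSet_Ici (measure_ne_top ν _)
      (fun x hx => pow_le_pow_left₀ hs hx _) hint.integrableOn
  have h2 : ∫ x in Ici s, x ^ (2*N) ∂ν ≤ ∫ x, x ^ (2*N) ∂ν :=
    setIntegral_le_integral hint (ae_of_all _ fun x => Even.pow_nonneg (even_two_mul N) x)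
  linarith

private lemma pow_eq_exp_aux {s : ℝ} (hs : 0 < s) (n : ℕ) :
    s ^ n = Real.exp (n * Real.log s) := by
  rw [← Real.log_pow, Real.exp_log (by positivity)]

/-- Upper bound: `ν[s,∞) ≤ exp((-pγ+δ) s^(2/p))` eventually. -/
private lemma UB_aux (p css γ : ℝ) (hp : 0 < p) (hγ : γ = Real.exp (-1 - css / p))
    (o : ℕ → ℝ) (ho : Tendsto (fun N : ℕ => o N / N) atTop (nhds 0))
    (ν : Measure ℝ) [IsProbabilityMeasure ν]
    (hM : ∀ N : ℕ, 1 ≤ N → ∫ x, x ^ (2*N) ∂ν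
      = Real.exp (p * N * Real.log N + css * N + o N))
    {δ : ℝ} (hδ : 0 < δ) :
    ∀ᶠ s : ℝ in atTop, (ν (Ici s)).toReal ≤ Real.exp ((-(p*γ) + δ) * s ^ ((2:ℝ)/p)) := by
  have hγ0 : 0 < γ := hγ ▸ Real.exp_pos _
  set α := (2:ℝ)/p with hα
  have hα0 : 0 < α := by positivity
  have hNf : Tendsto (fun s : ℝ => ⌊γ * s ^ α⌋₊) atTop atTop :=
    tendsto_nat_floor_atTop.comp ((tendsto_rpow_atTop hα0).const_mul_atTop hγ0)
  filter_upwards [EU_aux p css γ hp hγ o ho hδ, eventually_ge_atTop (1:ℝ),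
    hNf.eventually (eventually_ge_atTop 1)] with s hEU hs1 hN1
  have hs0 : (0:ℝ) < s := lt_of_lt_of_le one_pos hs1
  set N := ⌊γ * s ^ α⌋₊ with hNdef
  have hEU' := hEU N rfl
  have hmar := markov_aux ν N (int_aux hM N hN1) hs0.le
  rw [hM N hN1] at hmar
  have hps : (0:ℝ) < s ^ (2*N) := by positivity
  have h2 : (ν (Ici s)).toReal ≤
      Real.exp (p * N * Real.log N + css * N + o N) / s ^ (2*N) := by
    rw [le_div_iff₀ hps]; exact hmar
  have h3 : s ^ (2*N) = Real.exp (2 * N * Real.log s) := by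
    rw [pow_eq_exp_aux hs0]; push_cast; ring_nf
  rw [h3, ← Real.exp_sub] at h2
  refine h2.trans (Real.exp_le_exp.mpr ?_)
  linarith

private lemma geom_sum_le_aux {q : ℝ} (h0 : 0 ≤ q) (h1 : q < 1) (n : ℕ) :
    ∑ i ∈ Finset.range n, q ^ i ≤ (1-q)⁻¹ := by
  have h2 : q ≠ 1 := ne_of_lt h1
  rw [geom_sum_eq h2, div_le_iff_of_neg (by linarith : q - 1 < 0)]
  have h3 : (0:ℝ) ≤ q ^ n := by positivity
  have hid : (1-q)⁻¹*(q-1) = -1 := by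
    have : (1:ℝ) - q ≠ 0 := by linarith
    field_simp; ring
  linarith

/-- Head bound: for any `N ≥ ⌊γ a^α⌋`,
`∫_{[0,a)} x^{2N} dν ≤ exp(2N log a + (-pγ+δ) a^α)`. -/
private lemma head_aux (p css γ : ℝ) (hp : 0 < p) (hγ : γ = Real.exp (-1 - css / p))
    (o : ℕ → ℝ) (ho : Tendsto (fun N : ℕ => o N / N) atTop (nhds 0))
    (ν : Measure ℝ) [IsProbabilityMeasure ν]
    (hM : ∀ N : ℕ, 1 ≤ N → ∫ x, x ^ (2*N) ∂ν
      = Real.exp (p * N * Real.log N + css * N + o N))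
    {δ : ℝ} (hδ : 0 < δ) :
    ∀ᶠ a : ℝ in atTop, ∀ N : ℕ, ⌊γ * a ^ ((2:ℝ)/p)⌋₊ ≤ N →
      ∫ x in Ico 0 a, x ^ (2*N) ∂ν
        ≤ Real.exp (2 * N * Real.log a + (-(p*γ) + δ) * a ^ ((2:ℝ)/p)) := by
  have hγ0 : 0 < γ := hγ ▸ Real.exp_pos _
  set α := (2:ℝ)/p with hα
  have hα0 : 0 < α := by positivity
  have hNf : Tendsto (fun s : ℝ => ⌊γ * s ^ α⌋₊) atTop atTop :=
    tendsto_nat_floor_atTop.comp ((tendsto_rpow_atTop hα0).const_mul_atTop hγ0)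
  filter_upwards [EU_aux p css γ hp hγ o ho hδ, eventually_ge_atTop (1:ℝ),
    hNf.eventually (eventually_ge_atTop 1)] with a hEU ha1 hN'1
  intro N hN'N
  have ha0 : (0:ℝ) < a := lt_of_lt_of_le one_pos ha1
  set N' := ⌊γ * a ^ α⌋₊ with hN'def
  have hN1 : 1 ≤ N := le_trans hN'1 hN'N
  have hEU' := hEU N' rfl
  have hptwise : ∀ x ∈ Ico (0:ℝ) a, x ^ (2*N) ≤ a ^ (2*(N - N')) * x ^ (2*N') := by
    intro x hx
    have hsplit : 2*N = 2*(N - N') + 2*N' := by omega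
    rw [hsplit, pow_add]
    exact mul_le_mul_of_nonneg_right
      (pow_le_pow_left₀ hx.1 hx.2.le _)
      (pow_nonneg hx.1 _)
  have hmono : ∫ x in Ico 0 a, x ^ (2*N) ∂ν
      ≤ ∫ x in Ico 0 a, a ^ (2*(N - N')) * x ^ (2*N') ∂ν := by
    refine setIntegral_mono_on ((int_aux hM N hN1).integrableOn)
      (((int_aux hM N' hN'1).const_mul _).integrableOn) measurableSet_Ico hptwise
  have h2 : ∫ x in Ico 0 a, a ^ (2*(N - N')) * x ^ (2*N') ∂ν
      = a ^ (2*(N - N')) * ∫ x in Ico 0 a, x ^ (2*N') ∂ν := by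
    exact integral_const_mul _ _
  have h3 : ∫ x in Ico 0 a, x ^ (2*N') ∂ν ≤ ∫ x, x ^ (2*N') ∂ν :=
    setIntegral_le_integral (int_aux hM N' hN'1)
      (ae_of_all _ fun x => Even.pow_nonneg (even_two_mul N') x)
  have h4 : ∫ x in Ico 0 a, x ^ (2*N) ∂ν
      ≤ a ^ (2*(N - N')) * Real.exp (p * N' * Real.log N' + css * N' + o N') := by
    rw [← hM N' hN'1]
    calc ∫ x in Ico 0 a, x ^ (2*N) ∂ν
        ≤ a ^ (2*(N - N')) * ∫ x in Ico 0 a, x ^ (2*N') ∂ν := by rw [← h2]; exact hmono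
      _ ≤ a ^ (2*(N - N')) * ∫ x, x ^ (2*N') ∂ν :=
          mul_le_mul_of_nonneg_left h3 (by positivity)
  have h5 : a ^ (2*(N - N')) = Real.exp ((2*(N:ℝ) - 2*(N':ℝ)) * Real.log a) := by
    rw [pow_eq_exp_aux ha0]
    congr 1
    have : ((2*(N - N') : ℕ) : ℝ) = 2*(N:ℝ) - 2*(N':ℝ) := by
      push_cast [Nat.cast_sub hN'N]; ring
    rw [this]
  rw [h5, ← Real.exp_add] at h4
  refine h4.trans (Real.exp_le_exp.mpr ?_)
  linarith

/-- Tail bound via geometric blocks. -/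
private lemma tail_aux (p : ℝ) (hp : 0 < p) (ν : Measure ℝ) [IsProbabilityMeasure ν]
    (N : ℕ) (d B M1 : ℝ) (hB : 0 < B) (hd : p * N / B < d)
    (hint : Integrable (fun x : ℝ => x ^ (2*N)) ν)
    (hint1 : Integrable (fun x : ℝ => x ^ (2*(N+1))) ν)
    (hM1 : ∫ x, x ^ (2*(N+1)) ∂ν ≤ M1)
    (htail : ∀ j : ℕ, (ν (Ici ((B + j) ^ (p/2)))).toReal ≤ Real.exp (-(d * (B + j)))) :
    ∫ x in Ici (B ^ (p/2)), x ^ (2*N) ∂ν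
      ≤ Real.exp (p * N * Real.log B - d * B + p * N / B)
          / (1 - Real.exp (p * N / B - d)) := by
  set b : ℕ → ℝ := fun j => (B + j) ^ (p/2) with hb
  have hBj : ∀ j : ℕ, (0:ℝ) < B + j := fun j => by positivity
  have hb0 : ∀ j, 0 < b j := fun j => Real.rpow_pos_of_pos (hBj j) _
  have hbmono : ∀ j : ℕ, b j ≤ b (j+1) := by
    intro j
    apply Real.rpow_le_rpow (hBj j).le (by push_cast; linarith) (by positivity)
  -- evaluate powers of b j
  have hbpow : ∀ j : ℕ, ∀ M : ℕ, (b j) ^ (2*M) = Real.exp (p * M * Real.log (B + j)) := by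
    intro j M
    rw [pow_eq_exp_aux (hb0 j), hb, Real.log_rpow (hBj j)]
    push_cast; ring_nf
  set q := Real.exp (p * N / B - d) with hq
  have hq1 : q < 1 := by
    rw [hq, Real.exp_lt_one_iff]; linarith
  have hq0 : 0 < q := Real.exp_pos _
  set C := p * N * Real.log B - d * B + p * N / B with hC
  set term : ℕ → ℝ := fun j => Real.exp (p * N * Real.log (B + j + 1) - d * (B + j)) with hterm
  -- single step
  have hstep : ∀ j : ℕ, ∫ x in Ici (b j), x ^ (2*N) ∂ν
      ≤ term j + ∫ x in Ici (b (j+1)), x ^ (2*N) ∂ν := by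
    intro j
    have hsplit : Ici (b j) = Ico (b j) (b (j+1)) ∪ Ici (b (j+1)) :=
      (Ico_union_Ici_eq_Ici (hbmono j)).symm
    have hdisj : Disjoint (Ico (b j) (b (j+1))) (Ici (b (j+1))) :=
      Set.disjoint_left.mpr fun x hx hx' => absurd hx' (not_le.mpr hx.2)
    rw [hsplit, setIntegral_union hdisj measurableSet_Ici
      hint.integrableOn hint.integrableOn]
    have hmid : ∫ x in Ico (b j) (b (j+1)), x ^ (2*N) ∂ν ≤ term j := by
      have h1 : ∫ x in Ico (b j) (b (j+1)), x ^ (2*N) ∂ν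
          ≤ ∫ _x in Ico (b j) (b (j+1)), (b (j+1)) ^ (2*N) ∂ν := by
        refine setIntegral_mono_on hint.integrableOn ((integrableOn_const_iff).mpr ?_)
          measurableSet_Ico ?_
        · right; exact measure_lt_top ν _
        · intro x hx
          exact pow_le_pow_left₀ (le_trans (hb0 j).le hx.1) hx.2.le _
      have h2 : ∫ _x in Ico (b j) (b (j+1)), (b (j+1)) ^ (2*N) ∂ν
          = (ν (Ico (b j) (b (j+1)))).toReal * (b (j+1)) ^ (2*N) := by
        rw [setIntegral_const]; rfl
      have h3 : (ν (Ico (b j) (b (j+1)))).toReal ≤ Real.exp (-(d * (B + j))) := by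
        refine le_trans (ENNReal.toReal_mono (measure_ne_top ν _)
          (measure_mono Ico_subset_Ici_self)) (htail j)
      have h4 : (b (j+1)) ^ (2*N) = Real.exp (p * N * Real.log (B + j + 1)) := by
        rw [hbpow (j+1) N]; push_cast; ring_nf
      rw [h2, h4] at h1
      calc ∫ x in Ico (b j) (b (j+1)), x ^ (2*N) ∂ν
          ≤ (ν (Ico (b j) (b (j+1)))).toReal * Real.exp (p * N * Real.log (B + j + 1)) := h1
        _ ≤ Real.exp (-(d * (B + j))) * Real.exp (p * N * Real.log (B + j + 1)) :=
            mul_le_mul_of_nonneg_right h3 (Real.exp_pos _).le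
        _ = term j := by rw [hterm, ← Real.exp_add]; ring_nf
    linarith
  -- iterate
  have hiter : ∀ J : ℕ, ∫ x in Ici (b 0), x ^ (2*N) ∂ν
      ≤ (∑ j ∈ Finset.range J, term j) + ∫ x in Ici (b J), x ^ (2*N) ∂ν := by
    intro J
    induction J with
    | zero => simp
    | succ J ih =>
      rw [Finset.sum_range_succ]
      linarith [hstep J, ih]
  -- term bound by geometric
  have htermle : ∀ j : ℕ, term j ≤ Real.exp C * q ^ j := by
    intro j
    rw [hterm, hq, hC, ← Real.exp_nat_mul, ← Real.exp_add]
    apply Real.exp_le_exp.mpr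
    have hlog : Real.log (B + j + 1) ≤ Real.log B + (j + 1)/B := by
      have := log_add_le_aux hB (show (0:ℝ) ≤ (j:ℝ) + 1 by positivity)
      rw [← add_assoc] at this; exact this
    have hpN : (0:ℝ) ≤ p * N := by positivity
    have h := mul_le_mul_of_nonneg_left hlog hpN
    have hexpand : p * N * (Real.log B + ((j:ℝ) + 1)/B)
        = p * N * Real.log B + p * N / B + (j:ℝ) * (p * N / B) := by
      field_simp; ring
    nlinarith [h]
  have hgeom : ∀ J : ℕ, (∑ j ∈ Finset.range J, term j) ≤ Real.exp C * (1 - q)⁻¹ := by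
    intro J
    calc (∑ j ∈ Finset.range J, term j) ≤ ∑ j ∈ Finset.range J, Real.exp C * q ^ j :=
        Finset.sum_le_sum fun j _ => htermle j
      _ = Real.exp C * ∑ j ∈ Finset.range J, q ^ j := by rw [← Finset.mul_sum]
      _ ≤ Real.exp C * (1 - q)⁻¹ :=
        mul_le_mul_of_nonneg_left (geom_sum_le_aux hq0.le hq1 J) (Real.exp_pos _).le
  -- remainder bound
  have hM10 : 0 ≤ M1 := le_trans (integral_nonneg fun x => Even.pow_nonneg (even_two_mul _) x) hM1
  have hrem : ∀ J : ℕ, ∫ x in Ici (b J), x ^ (2*N) ∂ν ≤ M1 * (B + J) ^ (-p) := by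
    intro J
    have hbJsq : (b J) ^ 2 = (B + J) ^ p := by
      rw [hb, ← Real.rpow_natCast ((B + (J:ℝ)) ^ (p/2)) 2, ← Real.rpow_mul (hBj J).le]
      norm_num
    have h1 : ∫ x in Ici (b J), x ^ (2*N) ∂ν
        ≤ ∫ x in Ici (b J), ((b J) ^ 2)⁻¹ * x ^ (2*(N+1)) ∂ν := by
      refine setIntegral_mono_on hint.integrableOn (hint1.const_mul _).integrableOn
        measurableSet_Ici ?_
      intro x hx
      have hx0 : 0 ≤ x := le_trans (hb0 J).le hx
      have hbsq : (b J)^2 ≤ x^2 := pow_le_pow_left₀ (hb0 J).le hx 2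
      have hx2N : (0:ℝ) ≤ x ^ (2*N) := Even.pow_nonneg (even_two_mul N) x
      rw [le_inv_mul_iff₀ (by positivity)]
      calc (b J)^2 * x^(2*N) ≤ x^2 * x^(2*N) := mul_le_mul_of_nonneg_right hbsq hx2N
        _ = x ^ (2*(N+1)) := by ring
    have h2 : ∫ x in Ici (b J), ((b J) ^ 2)⁻¹ * x ^ (2*(N+1)) ∂ν
        = ((b J) ^ 2)⁻¹ * ∫ x in Ici (b J), x ^ (2*(N+1)) ∂ν := integral_const_mul _ _
    have h3 : ∫ x in Ici (b J), x ^ (2*(N+1)) ∂ν ≤ M1 :=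
      le_trans (setIntegral_le_integral hint1
        (ae_of_all _ fun x => Even.pow_nonneg (even_two_mul _) x)) hM1
    have h4 : ((b J) ^ 2)⁻¹ = (B + J) ^ (-p) := by
      rw [hbJsq, ← Real.rpow_neg (hBj J).le]
    calc ∫ x in Ici (b J), x ^ (2*N) ∂ν ≤ ((b J) ^ 2)⁻¹ * ∫ x in Ici (b J), x ^ (2*(N+1)) ∂ν := by
          rw [← h2]; exact h1
      _ ≤ ((b J) ^ 2)⁻¹ * M1 := mul_le_mul_of_nonneg_left h3 (by positivity)
      _ = M1 * (B + J) ^ (-p) := by rw [h4]; ring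
  -- pass to the limit
  have hlim : Tendsto (fun J : ℕ => Real.exp C * (1 - q)⁻¹ + M1 * (B + J) ^ (-p)) atTop
      (nhds (Real.exp C * (1 - q)⁻¹ + M1 * 0)) := by
    apply Tendsto.add tendsto_const_nhds
    apply Tendsto.const_mul
    exact (tendsto_rpow_neg_atTop hp).comp
      (tendsto_atTop_add_const_left atTop B tendsto_natCast_atTop_atTop)
  have hball : ∀ J : ℕ, ∫ x in Ici (b 0), x ^ (2*N) ∂ν
      ≤ Real.exp C * (1 - q)⁻¹ + M1 * (B + J) ^ (-p) := by
    intro J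
    calc ∫ x in Ici (b 0), x ^ (2*N) ∂ν
        ≤ (∑ j ∈ Finset.range J, term j) + ∫ x in Ici (b J), x ^ (2*N) ∂ν := hiter J
      _ ≤ Real.exp C * (1 - q)⁻¹ + M1 * (B + J) ^ (-p) := add_le_add (hgeom J) (hrem J)
  have hfinal : ∫ x in Ici (b 0), x ^ (2*N) ∂ν ≤ Real.exp C * (1 - q)⁻¹ + M1 * 0 :=
    ge_of_tendsto hlim (Eventually.of_forall hball)
  have hb00 : b 0 = B ^ (p/2) := by rw [hb]; norm_num
  rw [hb00, mul_zero, add_zero] at hfinal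
  rw [div_eq_mul_inv]
  exact hfinal

private lemma split_aux (ν : Measure ℝ) [IsProbabilityMeasure ν] (hsupp : ν (Iio 0) = 0)
    {f : ℝ → ℝ} (hint : Integrable f ν) {a b : ℝ} (ha : 0 ≤ a) (hab : a ≤ b) :
    ∫ x, f x ∂ν = (∫ x in Ico 0 a, f x ∂ν) + (∫ x in Ico a b, f x ∂ν)
      + ∫ x in Ici b, f x ∂ν := by
  have hdisj : ∀ u v : ℝ, Disjoint (Ico u v) (Ici v) :=
    fun u v => Set.disjoint_left.mpr fun x hx hx' => absurd hx' (not_le.mpr hx.2)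
  have h0 : ∫ x, f x ∂ν = ∫ x in Ici 0, f x ∂ν := by
    have h1 := integral_add_compl measurableSet_Iio hint (f := f) (μ := ν) (s := Iio (0:ℝ))
    have hz : ν.restrict (Iio 0) = 0 := Measure.restrict_eq_zero.mpr hsupp
    rw [hz, integral_zero_measure, zero_add, compl_Iio] at h1
    exact h1.symm
  have h2 : Ici (0:ℝ) = Ico 0 a ∪ (Ico a b ∪ Ici b) := by
    rw [Ico_union_Ici_eq_Ici hab, Ico_union_Ici_eq_Ici ha]
  have h3 : Disjoint (Ico (0:ℝ) a) (Ico a b ∪ Ici b) := by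
    rw [Ico_union_Ici_eq_Ici hab]; exact hdisj 0 a
  rw [h0, h2, setIntegral_union h3 ((measurableSet_Ico).union measurableSet_Ici)
      hint.integrableOn (hint.integrableOn.union hint.integrableOn),
    setIntegral_union (hdisj a b) measurableSet_Ici hint.integrableOn hint.integrableOn]
  ring

set_option maxHeartbeats 1000000 in
/-- Lower bound: `ν[s,∞) ≥ exp((-pγ-δ) s^(2/p))` eventually. -/
private lemma LB_aux (p css γ : ℝ) (hp : 0 < p) (hγ : γ = Real.exp (-1 - css / p))
    (o : ℕ → ℝ) (ho : Tendsto (fun N : ℕ => o N / N) atTop (nhds 0))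
    (ν : Measure ℝ) [IsProbabilityMeasure ν] (hsupp : ν (Iio 0) = 0)
    (hM : ∀ N : ℕ, 1 ≤ N → ∫ x, x ^ (2*N) ∂ν
      = Real.exp (p * N * Real.log N + css * N + o N))
    {δ : ℝ} (hδ : 0 < δ) :
    ∀ᶠ s : ℝ in atTop, Real.exp ((-(p*γ) - δ) * s ^ ((2:ℝ)/p)) ≤ (ν (Ici s)).toReal := by
  have hγ0 : 0 < γ := hγ ▸ Real.exp_pos _
  set α := (2:ℝ)/p with hα
  have hα0 : 0 < α := by positivity
  set cst := p * γ with hcstdef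
  have hcst : 0 < cst := by positivity
  -- constants
  set ε := min (1/2) (δ/(8*cst+1)) with hεdef
  have hε0 : 0 < ε := by apply lt_min <;> positivity
  have hε2 : ε ≤ 1/2 := min_le_left _ _
  have h1ε : 0 < 1 - ε := by linarith
  have h1pε : 0 < 1 + ε := by linarith
  have hεδ : 4 * ε * cst ≤ δ / 2 := by
    have h1 : ε ≤ δ/(8*cst+1) := min_le_right _ _
    have h2 := mul_le_mul_of_nonneg_right h1 hcst.le
    rw [div_mul_eq_mul_div, le_div_iff₀ (by positivity)] at h2
    nlinarith
  set κ := ε - Real.log (1+ε) with hκdef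
  have hκ : 0 < κ := by
    have h1 : Real.log (1+ε) < ε := by
      have h2 := Real.add_one_lt_exp (ne_of_gt hε0)
      calc Real.log (1+ε) < Real.log (Real.exp ε) :=
        Real.log_lt_log (by linarith) (by linarith)
      _ = ε := Real.log_exp ε
    linarith
  set κ' := -ε - Real.log (1-ε) with hκ'def
  have hκ' : 0 < κ' := by
    have h1 : Real.log (1-ε) < -ε := by
      calc Real.log (1-ε) < Real.log (Real.exp (-ε)) := by
            apply Real.log_lt_log h1ε
            have := Real.add_one_lt_exp (neg_ne_zero.mpr (ne_of_gt hε0))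
            linarith
      _ = -ε := Real.log_exp _
    linarith
  set θ := min (ε/(2*(1+ε))) (κ/(2*(1+ε))) with hθdef
  have hθ0 : 0 < θ := by apply lt_min <;> positivity
  have hθε : θ ≤ ε/(2*(1+ε)) := min_le_left _ _
  have hθκ : θ ≤ κ/(2*(1+ε)) := min_le_right _ _
  have hθ1 : θ < 1 := by
    have : ε/(2*(1+ε)) < 1 := by rw [div_lt_one (by positivity)]; linarith
    linarith [hθε]
  set d := (1-θ)*cst with hddef
  have hd0 : 0 < d := by
    have : 0 < 1 - θ := by linarith
    positivity
  have hdlt : cst/(1+ε) < d := by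
    rw [hddef, div_lt_iff₀ h1pε]
    have h1 : θ * (2*(1+ε)) ≤ ε := by
      have := mul_le_mul_of_nonneg_right hθε (by positivity : (0:ℝ) ≤ 2*(1+ε))
      rwa [div_mul_cancel₀ _ (by positivity)] at this
    nlinarith
  set q := Real.exp (cst/(1+ε) - d) with hqdef
  have hq0 : 0 < q := Real.exp_pos _
  have hq1 : q < 1 := by rw [hqdef, Real.exp_lt_one_iff]; linarith
  have h1q : 0 < 1 - q := by linarith
  set δ₁ := cst*κ'/2 with hδ₁def
  have hδ₁0 : 0 < δ₁ := by positivity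
  set δ₃ := min (min (cst*κ'/(8*γ)) (cst*κ/(4*γ))) (δ/(8*γ)) with hδ₃def
  have hδ₃0 : 0 < δ₃ := by
    apply lt_min; apply lt_min
    all_goals positivity
  have hδ₃a : δ₃ ≤ cst*κ'/(8*γ) := le_trans (min_le_left _ _) (min_le_left _ _)
  have hδ₃b : δ₃ ≤ cst*κ/(4*γ) := le_trans (min_le_left _ _) (min_le_right _ _)
  have hδ₃c : δ₃ ≤ δ/(8*γ) := min_le_right _ _
  set K₁ := (8/3)*Real.log 4/(cst*κ') with hK₁def
  set K₂ := (cst/(1+ε) - Real.log (1-q) + Real.log 4)*(4/(cst*κ)) with hK₂def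
  set K₃ := (2*cst/γ + δ/(8*γ) + Real.log 2)*(4/δ) with hK₃def
  -- eventual hypotheses
  have hδu0 : 0 < θ*cst := by positivity
  obtain ⟨x₁, hx₁⟩ := eventually_atTop.mp (head_aux p css γ hp hγ o ho ν hM hδ₁0)
  obtain ⟨x₀, hx₀⟩ := eventually_atTop.mp (UB_aux p css γ hp hγ o ho ν hM hδu0)
  obtain ⟨n₀, hn₀⟩ := eventually_atTop.mp (oev_aux ho hδ₃0)
  have hsα : Tendsto (fun s : ℝ => s ^ α) atTop atTop := tendsto_rpow_atTop hα0
  have hg : Tendsto (fun s : ℝ => γ * s ^ α) atTop atTop := hsα.const_mul_atTop hγ0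
  filter_upwards [eventually_ge_atTop (1:ℝ), eventually_ge_atTop x₁, eventually_ge_atTop x₀,
    hg.eventually (eventually_ge_atTop (n₀:ℝ)),
    hsα.eventually (eventually_ge_atTop K₁), hsα.eventually (eventually_ge_atTop K₂),
    hsα.eventually (eventually_ge_atTop K₃)] with s hs1 hsx₁ hsx₀ hsn₀ hsK₁ hsK₂ hsK₃
  have hs0 : (0:ℝ) < s := lt_of_lt_of_le one_pos hs1
  have hsα0 : (0:ℝ) < s ^ α := Real.rpow_pos_of_pos hs0 α
  -- main definitions
  set N := ⌈γ * s ^ α / (1-ε)⌉₊ with hNdef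
  have hN1 : 1 ≤ N := Nat.one_le_ceil_iff.mpr (by positivity)
  have hNlb : γ * s ^ α / (1-ε) ≤ (N:ℝ) := Nat.le_ceil _
  have hNub : (N:ℝ) ≤ γ * s ^ α / (1-ε) + 1 := le_of_lt (Nat.ceil_lt_add_one (by positivity))
  set T := (N:ℝ)/γ with hTdef
  have hT0 : 0 < T := by
    have : (0:ℝ) < N := by exact_mod_cast hN1
    positivity
  have hNR : (N:ℝ) = γ * T := by rw [hTdef]; field_simp
  set A := (1-ε)*T with hAdef
  set B := (1+ε)*T with hBdef
  have hA0 : 0 < A := by positivity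
  have hB0 : 0 < B := by positivity
  set a := A ^ (p/2) with hadef
  set b := B ^ (p/2) with hbdef
  have ha0 : 0 < a := Real.rpow_pos_of_pos hA0 _
  have hb0 : 0 < b := Real.rpow_pos_of_pos hB0 _
  have hAB : A ≤ B := by
    have h1 : (1-ε) ≤ 1+ε := by linarith
    exact mul_le_mul_of_nonneg_right h1 hT0.le
  have hab : a ≤ b := Real.rpow_le_rpow hA0.le hAB (by positivity)
  have hmul1 : (p/2) * α = 1 := by rw [hα]; field_simp
  have hmul2 : α * (p/2) = 1 := by rw [hα]; field_simp
  have hbpowα : ∀ X : ℝ, 0 < X → (X ^ (p/2)) ^ α = X := by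
    intro X hX
    rw [← Real.rpow_mul hX.le, hmul1, Real.rpow_one]
  have hapow : a ^ α = A := hbpowα A hA0
  -- position of s relative to a
  have hTge : s ^ α / (1-ε) ≤ T := by
    rw [hTdef, le_div_iff₀ hγ0]
    calc s ^ α / (1-ε) * γ = γ * s ^ α / (1-ε) := by ring
      _ ≤ (N:ℝ) := hNlb
  have hTsα : s ^ α ≤ T := by
    have h1 : s ^ α ≤ s ^ α / (1-ε) := by
      rw [le_div_iff₀ h1ε]
      have h2 : 0 ≤ ε * s ^ α := by positivity
      have h3 : s ^ α * (1-ε) = s ^ α - ε * s ^ α := by ring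
      linarith
    linarith
  have hTs : s ^ α ≤ A := by
    rw [hAdef]
    have h1 := mul_le_mul_of_nonneg_left hTge h1ε.le
    have h2 : (1-ε) * (s ^ α / (1-ε)) = s ^ α := by field_simp
    linarith [h2 ▸ h1]
  have hTub : T ≤ s ^ α / (1-ε) + 1/γ := by
    rw [hTdef, div_le_iff₀ hγ0]
    have h2 : (s ^ α / (1-ε) + 1/γ) * γ = γ * s ^ α / (1-ε) + 1 := by field_simp
    linarith [h2, hNub]
  have hsrw : s = (s ^ α) ^ (p/2) := by
    rw [← Real.rpow_mul hs0.le, hmul2, Real.rpow_one]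
  have hsa : s ≤ a := by
    rw [hadef, hsrw]
    exact Real.rpow_le_rpow (by positivity) hTs (by positivity)
  -- the chosen moment index is admissible for the head lemma
  have hNfloorle : ⌊γ * a ^ α⌋₊ ≤ N := by
    have h1 : γ * a ^ α = (1-ε) * (N:ℝ) := by rw [hapow, hAdef, hNR]; ring
    rw [h1]
    have h2 : (1-ε) * (N:ℝ) ≤ (N:ℝ) := by
      have : 0 ≤ ε * (N:ℝ) := by positivity
      linarith
    calc ⌊(1-ε) * (N:ℝ)⌋₊ ≤ ⌊(N:ℝ)⌋₊ := Nat.floor_le_floor h2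
      _ = N := Nat.floor_natCast N
  -- integrability and moments
  have hintN : Integrable (fun x : ℝ => x ^ (2*N)) ν := int_aux hM N hN1
  have hintN1 : Integrable (fun x : ℝ => x ^ (2*(N+1))) ν := int_aux hM (N+1) (by omega)
  set FN := p * (N:ℝ) * Real.log N + css * N + o N with hFNdef
  -- log identities
  have hloga : Real.log a = p/2 * Real.log A := Real.log_rpow hA0 _
  have hlogA : Real.log A = Real.log (1-ε) + Real.log T := by
    rw [hAdef, Real.log_mul (ne_of_gt h1ε) (ne_of_gt hT0)]
  have hlogB : Real.log B = Real.log (1+ε) + Real.log T := by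
    rw [hBdef, Real.log_mul (ne_of_gt h1pε) (ne_of_gt hT0)]
  have hlogN : Real.log (N:ℝ) = Real.log γ + Real.log T := by
    rw [hNR, Real.log_mul (ne_of_gt hγ0) (ne_of_gt hT0)]
  have hkey : p * Real.log γ + css = -p := by
    rw [hγ, Real.log_exp]; field_simp; ring
  have hoN : |o N| ≤ δ₃ * N := by
    apply hn₀
    have h1 : (n₀:ℝ) ≤ γ * s ^ α := hsn₀
    have h2 : γ * s ^ α ≤ γ * s ^ α / (1-ε) := by
      rw [le_div_iff₀ h1ε]
      have h3 : 0 ≤ ε * (γ * s ^ α) := by positivity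
      have h4 : γ * s ^ α * (1-ε) = γ * s ^ α - ε * (γ * s ^ α) := by ring
      linarith
    have h5 : (n₀:ℝ) ≤ (N:ℝ) := le_trans h1 (le_trans h2 hNlb)
    exact_mod_cast h5
  have hoNg : |o N| ≤ δ₃ * (γ * T) := by rw [← hNR]; exact hoN
  clear_value α cst ε κ κ' θ d q δ₁ δ₃ K₁ K₂ K₃ N T A B a b FN
  -- inequality (I): head is small
  have hIid : 2*(N:ℝ)*Real.log a + (-(p*γ)+δ₁)*A - FN
      = -(cst*κ')*T + δ₁*(1-ε)*T - o N := by
    rw [hFNdef, hloga, hlogA, hlogN, hNR, hκ'def, hAdef, hcstdef]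
    linear_combination (-(γ*T)) * hkey
  have hb1 : δ₁*(1-ε)*T ≤ cst*κ'*T/2 := by
    rw [hδ₁def]
    have h1 : (1-ε)*T ≤ T := by
      have : 0 ≤ ε*T := by positivity
      linarith
    have h2 := mul_le_mul_of_nonneg_left h1 (show (0:ℝ) ≤ cst*κ'/2 by positivity)
    calc cst*κ'/2*(1-ε)*T = cst*κ'/2*((1-ε)*T) := by ring
      _ ≤ cst*κ'/2*T := h2
      _ = cst*κ'*T/2 := by ring
  have hb2 : -o N ≤ cst*κ'*T/8 := by
    have e1 : δ₃*(γ*T) ≤ (cst*κ'/(8*γ))*(γ*T) :=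
      mul_le_mul_of_nonneg_right hδ₃a (by positivity)
    have e2 : (cst*κ'/(8*γ))*(γ*T) = cst*κ'*T/8 := by field_simp
    linarith [neg_abs_le (o N), hoNg]
  have hb3 : Real.log 4 ≤ 3/8*(cst*κ'*T) := by
    have h1 : K₁ ≤ T := le_trans hsK₁ hTsα
    have h2 := mul_le_mul_of_nonneg_left h1 (show (0:ℝ) ≤ cst*κ' by positivity)
    have h3 : (cst*κ')*K₁ = (8/3)*Real.log 4 := by
      rw [hK₁def, mul_comm, div_mul_cancel₀ _ (ne_of_gt (show (0:ℝ) < cst*κ' by positivity))]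
    linarith only [h2, h3]
  have hI : 2*(N:ℝ)*Real.log a + (-(p*γ)+δ₁)*(a ^ α) ≤ FN - Real.log 4 := by
    rw [hapow]; linarith only [hIid, hb1, hb2, hb3]
  -- inequality (II): tail is small
  have hIIid : p*(N:ℝ)*Real.log B - d*B - FN
      = -(cst*κ)*T + θ*(1+ε)*cst*T - o N := by
    rw [hFNdef, hlogB, hlogN, hNR, hκdef, hBdef, hddef, hcstdef]
    linear_combination (-(γ*T)) * hkey
  have hc1 : θ*(1+ε)*cst*T ≤ cst*κ*T/2 := by
    have h1 : θ*(1+ε) ≤ κ/2 := by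
      have h2 := mul_le_mul_of_nonneg_right hθκ h1pε.le
      have h3 : κ/(2*(1+ε))*(1+ε) = κ/2 := by field_simp
      linarith
    have h2 := mul_le_mul_of_nonneg_right h1 (show (0:ℝ) ≤ cst*T by positivity)
    calc θ*(1+ε)*cst*T = (θ*(1+ε))*(cst*T) := by ring
      _ ≤ (κ/2)*(cst*T) := h2
      _ = cst*κ*T/2 := by ring
  have hc2 : -o N ≤ cst*κ*T/4 := by
    have e1 : δ₃*(γ*T) ≤ (cst*κ/(4*γ))*(γ*T) :=
      mul_le_mul_of_nonneg_right hδ₃b (by positivity)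
    have e2 : (cst*κ/(4*γ))*(γ*T) = cst*κ*T/4 := by field_simp
    linarith [neg_abs_le (o N), hoNg]
  have hc3 : cst/(1+ε) - Real.log (1-q) + Real.log 4 ≤ cst*κ*T/4 := by
    have h1 : K₂ ≤ T := le_trans hsK₂ hTsα
    have h2 := mul_le_mul_of_nonneg_left h1 (show (0:ℝ) ≤ cst*κ/4 by positivity)
    have h3 : (cst*κ/4)*K₂ = cst/(1+ε) - Real.log (1-q) + Real.log 4 := by
      have hne : cst*κ ≠ 0 := ne_of_gt (by positivity)
      rw [hK₂def]; field_simp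
    linarith only [h2, h3]
  have hII : p*(N:ℝ)*Real.log B - d*B + cst/(1+ε) - Real.log (1-q) ≤ FN - Real.log 4 := by
    linarith
  -- inequality (III): conclusion exponent
  have hIIIid : FN - Real.log 2 - p*(N:ℝ)*Real.log B
      = -(cst*T) - cst*T*Real.log (1+ε) + o N - Real.log 2 := by
    rw [hFNdef, hlogB, hlogN, hNR, hcstdef]
    linear_combination (γ*T) * hkey
  have hlog1pε : Real.log (1+ε) ≤ ε := by rw [hκdef] at hκ; linarith
  have hd1 : cst*T*Real.log (1+ε) ≤ cst*T*ε :=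
    mul_le_mul_of_nonneg_left hlog1pε (by positivity)
  have hfrac : cst*(1+ε)/(1-ε) ≤ cst + δ/2 := by
    rw [div_le_iff₀ h1ε]
    have h1 : 2*cst*ε ≤ δ/4 := by linarith
    have h2 : δ/4 ≤ (δ/2)*(1-ε) := by
      have h3 := mul_le_mul_of_nonneg_left (show (1:ℝ)/2 ≤ 1-ε by linarith)
        (show (0:ℝ) ≤ δ/2 by positivity)
      have h4 : (δ/2)*(1/2) = δ/4 := by ring
      linarith
    have h5 : (cst+δ/2)*(1-ε) = cst - cst*ε + (δ/2)*(1-ε) := by ring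
    linarith
  have hd2 : cst*(1+ε)*T ≤ (cst + δ/2)*s ^ α + 2*cst/γ := by
    have h1 := mul_le_mul_of_nonneg_left hTub (show (0:ℝ) ≤ cst*(1+ε) by positivity)
    have h2 : cst*(1+ε)*(s ^ α/(1-ε) + 1/γ)
        = (cst*(1+ε)/(1-ε))*s ^ α + cst*(1+ε)/γ := by field_simp
    have h3 := mul_le_mul_of_nonneg_right hfrac hsα0.le
    have h4 : cst*(1+ε)/γ ≤ 2*cst/γ := by
      have h5 : cst*(1+ε) ≤ 2*cst := by
        have h6 := mul_le_mul_of_nonneg_left (show ε ≤ (1:ℝ) by linarith) hcst.le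
        have h7 : cst*(1+ε) = cst + cst*ε := by ring
        linarith
      rw [div_eq_mul_inv, div_eq_mul_inv]
      exact mul_le_mul_of_nonneg_right h5 (inv_nonneg.mpr hγ0.le)
    calc cst*(1+ε)*T ≤ cst*(1+ε)*(s ^ α/(1-ε) + 1/γ) := h1
      _ = (cst*(1+ε)/(1-ε))*s ^ α + cst*(1+ε)/γ := h2
      _ ≤ (cst+δ/2)*s ^ α + 2*cst/γ := add_le_add h3 h4
  have hd3 : -o N ≤ (δ/4)*s ^ α + δ/(8*γ) := by
    have e1 : δ₃*(γ*T) ≤ (δ/(8*γ))*(γ*T) := mul_le_mul_of_nonneg_right hδ₃c (by positivity)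
    have e2 : (δ/(8*γ))*(γ*T) = (δ/8)*T := by field_simp
    have e3 : (δ/8)*T ≤ (δ/8)*(s ^ α/(1-ε) + 1/γ) :=
      mul_le_mul_of_nonneg_left hTub (by positivity)
    have e4 : s ^ α/(1-ε) ≤ 2*s ^ α := by
      rw [div_le_iff₀ h1ε]
      have e5 : 2*s ^ α*(1-ε) = 2*s ^ α - 2*ε*s ^ α := by ring
      have e6 : 2*ε*s ^ α ≤ s ^ α := by
        have e7 := mul_le_mul_of_nonneg_right (show 2*ε ≤ (1:ℝ) by linarith) hsα0.le
        linarith [e7]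
      linarith
    have e8 : (δ/8)*(s ^ α/(1-ε) + 1/γ) ≤ (δ/8)*(2*s ^ α + 1/γ) := by
      apply mul_le_mul_of_nonneg_left _ (by positivity)
      linarith
    have e9 : (δ/8)*(2*s ^ α + 1/γ) = (δ/4)*s ^ α + δ/(8*γ) := by field_simp; ring
    linarith [neg_abs_le (o N), hoNg]
  have hd4 : Real.log 2 + 2*cst/γ + δ/(8*γ) ≤ (δ/4)*s ^ α := by
    have h1 := mul_le_mul_of_nonneg_left hsK₃ (show (0:ℝ) ≤ δ/4 by positivity)
    have h2 : (δ/4)*K₃ = 2*cst/γ + δ/(8*γ) + Real.log 2 := by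
      have hne : δ ≠ 0 := ne_of_gt hδ
      rw [hK₃def]; field_simp
    linarith
  have hIII : (-cst - δ)*s ^ α ≤ FN - Real.log 2 - p*(N:ℝ)*Real.log B := by
    rw [hIIIid]
    have hring : cst*T + cst*T*ε = cst*(1+ε)*T := by ring
    linarith [hd1, hd2, hd3, hd4]
    -- apply the head lemma
  have hHead : ∫ x in Ico 0 a, x ^ (2*N) ∂ν ≤ Real.exp (FN - Real.log 4) := by
    have hNfl : ⌊γ * a ^ ((2:ℝ)/p)⌋₊ ≤ N := by rw [← hα]; exact hNfloorle
    have h1 := hx₁ a (le_trans hsx₁ hsa) N hNfl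
    rw [← hα] at h1
    exact le_trans h1 (Real.exp_le_exp.mpr hI)
  -- apply the tail lemma
  have hpNB : p*(N:ℝ)/B = cst/(1+ε) := by
    rw [hNR, hBdef, hcstdef]
    field_simp
  have hdB : p*(N:ℝ)/B < d := by rw [hpNB]; exact hdlt
  have htailj : ∀ j : ℕ, (ν (Ici ((B + j) ^ (p/2)))).toReal ≤ Real.exp (-(d*(B + j))) := by
    intro j
    have hBj0 : (0:ℝ) < B + j := by positivity
    have hxj : x₀ ≤ (B + j) ^ (p/2) := by
      refine le_trans hsx₀ ?_
      calc s = (s ^ α) ^ (p/2) := hsrw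
        _ ≤ (B + j) ^ (p/2) := by
            apply Real.rpow_le_rpow (by positivity) ?_ (by positivity)
            have : (0:ℝ) ≤ (j:ℕ) := by positivity
            calc s ^ α ≤ A := hTs
              _ ≤ B := hAB
              _ ≤ B + j := by linarith [this]
    have h2 := hx₀ _ hxj
    rw [← hα] at h2
    rw [hbpowα _ hBj0] at h2
    refine le_trans h2 (le_of_eq ?_)
    congr 1
    rw [hddef, hcstdef]; ring
  have htail := tail_aux p hp ν N d B
    (Real.exp (p*((N:ℕ)+1:ℕ)*Real.log ((N:ℕ)+1:ℕ) + css*((N:ℕ)+1:ℕ) + o (N+1)))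
    hB0 hdB hintN hintN1 (le_of_eq (hM (N+1) (by omega))) htailj
  rw [hpNB, ← hqdef] at htail
  have hTail : ∫ x in Ici b, x ^ (2*N) ∂ν ≤ Real.exp (FN - Real.log 4) := by
    rw [hbdef]
    refine le_trans htail ?_
    rw [← Real.exp_log h1q, ← Real.exp_sub]
    exact Real.exp_le_exp.mpr hII
  -- split the total moment
  have hsplit := split_aux ν hsupp hintN ha0.le hab
  rw [hM N hN1, ← hFNdef] at hsplit
  -- middle part
  have hb2N : b ^ (2*N) = Real.exp (p*(N:ℝ)*Real.log B) := by
    rw [hbdef, pow_eq_exp_aux (Real.rpow_pos_of_pos hB0 _), Real.log_rpow hB0]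
    push_cast; ring_nf
  have hMid : ∫ x in Ico a b, x ^ (2*N) ∂ν
      ≤ Real.exp (p*(N:ℝ)*Real.log B) * (ν (Ici s)).toReal := by
    have h1 : ∫ x in Ico a b, x ^ (2*N) ∂ν ≤ ∫ _x in Ico a b, b ^ (2*N) ∂ν :=
      setIntegral_mono_on hintN.integrableOn
        ((integrableOn_const_iff).mpr (Or.inr (measure_lt_top _ _))) measurableSet_Ico
        (fun x hx => pow_le_pow_left₀ (le_trans ha0.le hx.1) hx.2.le _)
    have h2 : ∫ _x in Ico a b, b ^ (2*N) ∂ν = (ν (Ico a b)).toReal * b ^ (2*N) := by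
      rw [setIntegral_const, smul_eq_mul]; rfl
    have h3 : (ν (Ico a b)).toReal ≤ (ν (Ici s)).toReal :=
      ENNReal.toReal_mono (measure_ne_top ν _)
        (measure_mono (fun x hx => le_trans hsa hx.1))
    calc ∫ x in Ico a b, x ^ (2*N) ∂ν ≤ (ν (Ico a b)).toReal * b ^ (2*N) := by
          rw [← h2]; exact h1
      _ ≤ (ν (Ici s)).toReal * b ^ (2*N) := by
          apply mul_le_mul_of_nonneg_right h3
          rw [hb2N]; exact (Real.exp_pos _).le
      _ = Real.exp (p*(N:ℝ)*Real.log B) * (ν (Ici s)).toReal := by rw [hb2N]; ring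
  have he4 : Real.exp (FN - Real.log 4) = Real.exp FN / 4 := by
    rw [Real.exp_sub, Real.exp_log]; norm_num
  have hmidlb : Real.exp FN / 2 ≤ ∫ x in Ico a b, x ^ (2*N) ∂ν := by
    rw [he4] at hHead hTail
    linarith [hHead, hTail, hsplit]
  have hfin : Real.exp (FN - Real.log 2 - p*(N:ℝ)*Real.log B) ≤ (ν (Ici s)).toReal := by
    rw [Real.exp_sub, Real.exp_sub, Real.exp_log two_pos, div_le_iff₀ (Real.exp_pos _)]
    calc Real.exp FN / 2 ≤ ∫ x in Ico a b, x ^ (2*N) ∂ν := hmidlb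
      _ ≤ Real.exp (p*(N:ℝ)*Real.log B) * (ν (Ici s)).toReal := hMid
      _ = (ν (Ici s)).toReal * Real.exp (p*(N:ℝ)*Real.log B) := by ring
  exact le_trans (Real.exp_le_exp.mpr hIII) hfin

/-- Full tail asymptotics from moment asymptotics: if
`∫ x^{2N} dν = N^{β²N/2} e^{c** N + o(N)}`, then
`t^{-4/β²} log ν[t,∞) → -c*` with `c* = (β²/2) e^{-1-2c**/β²}`. -/
theorem tail_asymptotics_from_moments (β : ℝ) (hβ : β ∈ Set.Ioo 0 (Real.sqrt 2))
    (ν : Measure ℝ) [IsProbabilityMeasure ν] (hsupp : ν (Set.Iio 0) = 0)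
    (css : ℝ) (o : ℕ → ℝ)
    (ho : Tendsto (fun N : ℕ => o N / N) atTop (nhds 0))
    (hmom : ∀ N : ℕ, 1 ≤ N →
      ∫ x, x ^ (2 * N) ∂ν = (N : ℝ) ^ (β ^ 2 * (N : ℝ) / 2) * Real.exp (css * N + o N)) :
    Tendsto (fun t : ℝ => Real.log (ν (Set.Ici t)).toReal / t ^ ((4 : ℝ) / β ^ 2)) atTop
      (nhds (-(β ^ 2 / 2 * Real.exp (-1 - 2 * css / β ^ 2)))) := by
  obtain ⟨hβ0, hβ2⟩ := hβ
  set p := β^2/2 with hpdef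
  have hp : 0 < p := by positivity
  set γ := Real.exp (-1 - css/p) with hγdef
  have hβne : β ≠ 0 := ne_of_gt hβ0
  have hexp : (4:ℝ)/β^2 = 2/p := by rw [hpdef]; field_simp; ring
  have hconst : β^2/2 * Real.exp (-1 - 2*css/β^2) = p*γ := by
    rw [hγdef, hpdef]
    congr 2
    field_simp
  have hM : ∀ N : ℕ, 1 ≤ N → ∫ x, x ^ (2*N) ∂ν
      = Real.exp (p * N * Real.log N + css * N + o N) := by
    intro N hN
    have hN0 : (0:ℝ) < N := by exact_mod_cast hN
    rw [hmom N hN, Real.rpow_def_of_pos hN0, ← Real.exp_add]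
    congr 1
    rw [hpdef]; ring
  rw [hexp, hconst]
  rw [Metric.tendsto_nhds]
  intro ε' hε'
  have hδ : (0:ℝ) < ε'/2 := by positivity
  have hub := UB_aux p css γ hp hγdef o ho ν hM hδ
  have hlb := LB_aux p css γ hp hγdef o ho ν hsupp hM hδ
  filter_upwards [hub, hlb, eventually_ge_atTop (1:ℝ)] with t hub hlb ht1
  have ht0 : (0:ℝ) < t := lt_of_lt_of_le one_pos ht1
  have htα : (0:ℝ) < t ^ ((2:ℝ)/p) := Real.rpow_pos_of_pos ht0 _
  have hpos : (0:ℝ) < (ν (Set.Ici t)).toReal := lt_of_lt_of_le (Real.exp_pos _) hlb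
  have h1 : Real.log (ν (Set.Ici t)).toReal ≤ (-(p*γ) + ε'/2) * t ^ ((2:ℝ)/p) := by
    calc Real.log (ν (Set.Ici t)).toReal
        ≤ Real.log (Real.exp ((-(p*γ) + ε'/2) * t ^ ((2:ℝ)/p))) := Real.log_le_log hpos hub
      _ = (-(p*γ) + ε'/2) * t ^ ((2:ℝ)/p) := Real.log_exp _
  have h2 : (-(p*γ) - ε'/2) * t ^ ((2:ℝ)/p) ≤ Real.log (ν (Set.Ici t)).toReal := by
    calc (-(p*γ) - ε'/2) * t ^ ((2:ℝ)/p)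
        = Real.log (Real.exp ((-(p*γ) - ε'/2) * t ^ ((2:ℝ)/p))) := (Real.log_exp _).symm
      _ ≤ Real.log (ν (Set.Ici t)).toReal := Real.log_le_log (Real.exp_pos _) hlb
  rw [Real.dist_eq]
  have h3 : Real.log (ν (Set.Ici t)).toReal / t ^ ((2:ℝ)/p) ≤ -(p*γ) + ε'/2 := by
    rw [div_le_iff₀ htα]; exact h1
  have h4 : -(p*γ) - ε'/2 ≤ Real.log (ν (Set.Ici t)).toReal / t ^ ((2:ℝ)/p) := by
    rw [le_div_iff₀ htα]; exact h2
  have h5 : |Real.log (ν (Set.Ici t)).toReal / t ^ ((2:ℝ)/p) - -(p*γ)| ≤ ε'/2 :=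
    abs_le.mpr ⟨by linarith, by linarith⟩
  linarith
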